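/- Ramanujan's functions P, Q, R defined by P(q) = 1 − 24∑_{n≥1} n qⁿ/(1−qⁿ), Q(q) = 1 + 240∑_{n≥1} n³qⁿ/(1−qⁿ), R(q) = 1 − 504∑_{n≥1} n⁵qⁿ/(1−qⁿ), regarded as formal power series in q, satisfy δP = (P²−Q)/12 where δ = q d/dq. -/

import Mathlib

open Finset

namespace RamanujanPOde

/-! ### Auxiliary: Gauss-type sums -/

lemma gauss1 (s : ℕ) : ∑ a ∈ Ico 1 s, (a : ℚ) = s * (s - 1) / 2 := by
  induction s with
  | zero => simp
  | succ m ih =>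
    rcases Nat.eq_zero_or_pos m with rfl | hm
    · simp
    · rw [Finset.sum_Ico_succ_top (by omega), ih]
      push_cast
      ring

lemma gauss2 (s : ℕ) : ∑ a ∈ Ico 1 s, (a : ℚ) ^ 2 = s * (s - 1) * (2 * s - 1) / 6 := by
  induction s with
  | zero => simp
  | succ m ih =>
    rcases Nat.eq_zero_or_pos m with rfl | hm
    · simp
    · rw [Finset.sum_Ico_succ_top (by omega), ih]
      push_cast
      ring

/-! ### The quadruple set -/

/-- Quadruples `((a,x),(b,y))` of positive naturals with `a*x + b*y = n`. -/
def Qd (n : ℕ) : Finset ((ℕ × ℕ) × (ℕ × ℕ)) :=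
  ((Ioc 0 n ×ˢ Ioc 0 n) ×ˢ (Ioc 0 n ×ˢ Ioc 0 n)).filter
    fun q => q.1.1 * q.1.2 + q.2.1 * q.2.2 = n

lemma mem_Qd {n : ℕ} {q : (ℕ × ℕ) × (ℕ × ℕ)} :
    q ∈ Qd n ↔ 0 < q.1.1 ∧ 0 < q.1.2 ∧ 0 < q.2.1 ∧ 0 < q.2.2 ∧
      q.1.1 * q.1.2 + q.2.1 * q.2.2 = n := by
  obtain ⟨⟨a, x⟩, b, y⟩ := q
  simp only [Qd, mem_filter, mem_product, mem_Ioc]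
  constructor
  · rintro ⟨⟨⟨⟨ha, -⟩, hx, -⟩, ⟨hb, -⟩, hy, -⟩, h⟩
    exact ⟨ha, hx, hb, hy, h⟩
  · rintro ⟨ha, hx, hb, hy, h⟩
    have := Nat.le_mul_of_pos_right a hx
    have := Nat.le_mul_of_pos_left x ha
    have := Nat.le_mul_of_pos_right b hy
    have := Nat.le_mul_of_pos_left y hb
    exact ⟨⟨⟨⟨ha, by omega⟩, hx, by omega⟩, ⟨hb, by omega⟩, hy, by omega⟩, h⟩

/-- weight `a*b` -/
def v (q : (ℕ × ℕ) × (ℕ × ℕ)) : ℚ := (q.1.1 : ℚ) * q.2.1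
/-- weight `a² + b² - a*b` -/
def W (q : (ℕ × ℕ) × (ℕ × ℕ)) : ℚ := (q.1.1 : ℚ) ^ 2 + (q.2.1 : ℚ) ^ 2 - q.1.1 * q.2.1

/-- The regions: E (x=y), X (x>y), Y (x<y), F (a=b), B (a<b), B' (a>b). -/
def Ef (n : ℕ) : Finset ((ℕ × ℕ) × (ℕ × ℕ)) := (Qd n).filter (fun q => q.1.2 = q.2.2)
def Xf (n : ℕ) : Finset ((ℕ × ℕ) × (ℕ × ℕ)) := (Qd n).filter (fun q => q.2.2 < q.1.2)
def Yf (n : ℕ) : Finset ((ℕ × ℕ) × (ℕ × ℕ)) := (Qd n).filter (fun q => q.1.2 < q.2.2)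
def Ff (n : ℕ) : Finset ((ℕ × ℕ) × (ℕ × ℕ)) := (Qd n).filter (fun q => q.1.1 = q.2.1)
def Bf (n : ℕ) : Finset ((ℕ × ℕ) × (ℕ × ℕ)) := (Qd n).filter (fun q => q.1.1 < q.2.1)
def Bf' (n : ℕ) : Finset ((ℕ × ℕ) × (ℕ × ℕ)) := (Qd n).filter (fun q => q.2.1 < q.1.1)

/-- generic trichotomy split -/
lemma sum_trichotomy {α : Type*} [DecidableEq α] (s : Finset α) (f : α → ℚ) (u w : α → ℕ) :
    ∑ a ∈ s, f a =
      ∑ a ∈ s.filter (fun a => u a = w a), f a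
      + ∑ a ∈ s.filter (fun a => u a < w a), f a
      + ∑ a ∈ s.filter (fun a => w a < u a), f a := by
  rw [← Finset.sum_filter_add_sum_filter_not s (fun a => u a = w a) f,
    ← Finset.sum_filter_add_sum_filter_not (s.filter (fun a => ¬ u a = w a))
      (fun a => u a < w a) f, Finset.filter_filter, Finset.filter_filter]
  have e1 : ∀ a ∈ s, (¬ u a = w a ∧ u a < w a) ↔ u a < w a := fun a _ => by omega
  have e2 : ∀ a ∈ s, (¬ u a = w a ∧ ¬ u a < w a) ↔ w a < u a := fun a _ => by omega
  rw [Finset.filter_congr e1, Finset.filter_congr e2]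
  ring

lemma swap_mem_Qd {n : ℕ} {q : (ℕ × ℕ) × (ℕ × ℕ)} (h : q ∈ Qd n) : q.swap ∈ Qd n := by
  rw [mem_Qd] at h ⊢
  obtain ⟨h1, h2, h3, h4, h5⟩ := h
  exact ⟨h3, h4, h1, h2, by dsimp only [Prod.swap]; omega⟩

/-- swap bijection on filtered sums -/
lemma sum_swap_filter {n : ℕ} (f : (ℕ × ℕ) × (ℕ × ℕ) → ℚ) (hf : ∀ q, f q.swap = f q)
    (p : (ℕ × ℕ) × (ℕ × ℕ) → Prop) [DecidablePred p] :
    ∑ q ∈ (Qd n).filter p, f q = ∑ q ∈ (Qd n).filter (fun q => p q.swap), f q := by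
  refine Finset.sum_nbij' (fun q => q.swap) (fun q => q.swap) ?_ ?_ ?_ ?_ ?_
  · intro q hq
    rw [mem_filter] at hq ⊢
    exact ⟨swap_mem_Qd hq.1, by simpa using hq.2⟩
  · intro q hq
    rw [mem_filter] at hq ⊢
    exact ⟨swap_mem_Qd hq.1, hq.2⟩
  · intro q _; exact Prod.swap_swap q
  · intro q _; exact Prod.swap_swap q
  · intro q _; exact (hf q).symm

/-- the key bijection `(a,x,b,y) ↦ (a,x+y,b-a,y)` from region a<b to region x>y -/
lemma phi_sum (n : ℕ) :
    ∑ q ∈ Bf n, W q = ∑ q ∈ Xf n, (W q + 2 * v q) := by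
  refine Finset.sum_nbij'
    (fun q => ((q.1.1, q.1.2 + q.2.2), (q.2.1 - q.1.1, q.2.2)))
    (fun q => ((q.1.1, q.1.2 - q.2.2), (q.1.1 + q.2.1, q.2.2))) ?_ ?_ ?_ ?_ ?_
  · rintro ⟨⟨a, x⟩, b, y⟩ hq
    simp only [Bf, Xf, mem_filter, mem_Qd] at hq ⊢
    obtain ⟨⟨ha, hx, hb, hy, h⟩, hab⟩ := hq
    have h1 : (b - a) * y + a * y = b * y := by
      rw [← Nat.add_mul, Nat.sub_add_cancel (le_of_lt hab)]
    have h3 : a * (x + y) = a * x + a * y := Nat.mul_add a x y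
    exact ⟨⟨ha, by omega, by omega, hy, by omega⟩, by omega⟩
  · rintro ⟨⟨a, x⟩, b, y⟩ hq
    simp only [Bf, Xf, mem_filter, mem_Qd] at hq ⊢
    obtain ⟨⟨ha, hx, hb, hy, h⟩, hxy⟩ := hq
    have h1 : a * (x - y) + a * y = a * x := by
      rw [← Nat.mul_add, Nat.sub_add_cancel (le_of_lt hxy)]
    have h2 : (a + b) * y = a * y + b * y := Nat.add_mul a b y
    exact ⟨⟨ha, by omega, by omega, hy, by omega⟩, by omega⟩
  · rintro ⟨⟨a, x⟩, b, y⟩ hq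
    simp only [Bf, mem_filter] at hq
    obtain ⟨-, hab⟩ := hq
    have h1 : x + y - y = x := by omega
    have h2 : a + (b - a) = b := by omega
    simp only [h1, h2]
  · rintro ⟨⟨a, x⟩, b, y⟩ hq
    simp only [Xf, mem_filter] at hq
    obtain ⟨-, hxy⟩ := hq
    have h1 : x - y + y = x := by omega
    have h2 : a + b - a = b := by omega
    simp only [h1, h2]
  · rintro ⟨⟨a, x⟩, b, y⟩ hq
    simp only [Bf, mem_filter, mem_Qd] at hq
    obtain ⟨⟨ha, hx, hb, hy, h⟩, hab⟩ := hq
    simp only [W, v]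
    have hc : ((b - a : ℕ) : ℚ) = (b : ℚ) - a := by
      rw [Nat.cast_sub (le_of_lt hab)]
    rw [hc]
    ring

/-- E diagonal parametrization -/
lemma sum_E (n : ℕ) (hn : 0 < n) (g : (ℕ × ℕ) × (ℕ × ℕ) → ℚ) :
    ∑ q ∈ Ef n, g q
      = ∑ s ∈ n.divisors, ∑ a ∈ Ico 1 s, g ((a, n / s), (s - a, n / s)) := by
  rw [← Finset.sum_sigma (n.divisors) (fun s => Ico 1 s)
    (fun r => g ((r.2, n / r.1), (r.1 - r.2, n / r.1)))]
  refine Finset.sum_nbij' (fun q => ⟨q.1.1 + q.2.1, q.1.1⟩)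
    (fun r => ((r.2, n / r.1), (r.1 - r.2, n / r.1))) ?_ ?_ ?_ ?_ ?_
  · rintro ⟨⟨a, x⟩, b, y⟩ hq
    simp only [Ef, mem_filter, mem_Qd] at hq
    obtain ⟨⟨ha, hx, hb, hy, h⟩, hxy⟩ := hq
    subst hxy
    simp only [Finset.mem_sigma, Nat.mem_divisors, mem_Ico]
    have hd : (a + b) * x = n := by rw [Nat.add_mul]; omega
    exact ⟨⟨⟨x, hd.symm⟩, by omega⟩, by omega, by omega⟩
  · rintro ⟨s, a⟩ hr
    simp only [Finset.mem_sigma, Nat.mem_divisors, mem_Ico] at hr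
    obtain ⟨⟨hs, -⟩, ha1, has⟩ := hr
    have hs0 : 0 < s := by omega
    have hsn : s ≤ n := Nat.le_of_dvd hn hs
    have hq : 0 < n / s := Nat.div_pos hsn hs0
    have hc : (a + (s - a)) * (n / s) = n := by
      rw [show a + (s - a) = s by omega, Nat.mul_div_cancel' hs]
    simp only [Ef, mem_filter, mem_Qd]
    refine ⟨⟨by omega, hq, by omega, hq, by rw [← Nat.add_mul]; exact hc⟩, by trivial⟩
  · rintro ⟨⟨a, x⟩, b, y⟩ hq
    simp only [Ef, mem_filter, mem_Qd] at hq
    obtain ⟨⟨ha, hx, hb, hy, h⟩, hxy⟩ := hq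
    subst hxy
    have hd : (a + b) * x = n := by rw [Nat.add_mul]; omega
    have hx' : n / (a + b) = x := by rw [← hd, Nat.mul_div_cancel_left x (by omega)]
    have hb' : a + b - a = b := by omega
    simp only [hx', hb']
  · rintro ⟨s, a⟩ hr
    simp only [Finset.mem_sigma, Nat.mem_divisors, mem_Ico] at hr
    obtain ⟨⟨hs, -⟩, ha1, has⟩ := hr
    have : a + (s - a) = s := by omega
    simp [this]
  · rintro ⟨⟨a, x⟩, b, y⟩ hq
    simp only [Ef, mem_filter, mem_Qd] at hq
    obtain ⟨⟨ha, hx, hb, hy, h⟩, hxy⟩ := hq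
    subst hxy
    have hd : (a + b) * x = n := by rw [Nat.add_mul]; omega
    have hx' : n / (a + b) = x := by rw [← hd, Nat.mul_div_cancel_left x (by omega)]
    have hb' : a + b - a = b := by omega
    rw [hx', hb']

/-- F diagonal parametrization -/
lemma sum_F (n : ℕ) (hn : 0 < n) (g : (ℕ × ℕ) × (ℕ × ℕ) → ℚ) :
    ∑ q ∈ Ff n, g q
      = ∑ d ∈ n.divisors, ∑ x ∈ Ico 1 (n / d), g ((d, x), (d, n / d - x)) := by
  rw [← Finset.sum_sigma (n.divisors) (fun d => Ico 1 (n / d))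
    (fun r => g ((r.1, r.2), (r.1, n / r.1 - r.2)))]
  refine Finset.sum_nbij' (fun q => ⟨q.1.1, q.1.2⟩)
    (fun r => ((r.1, r.2), (r.1, n / r.1 - r.2))) ?_ ?_ ?_ ?_ ?_
  · rintro ⟨⟨a, x⟩, b, y⟩ hq
    simp only [Ff, mem_filter, mem_Qd] at hq
    obtain ⟨⟨ha, hx, hb, hy, h⟩, hab⟩ := hq
    subst hab
    simp only [Finset.mem_sigma, Nat.mem_divisors, mem_Ico]
    have hd : a * (x + y) = n := by rw [Nat.mul_add]; omega
    have hx' : n / a = x + y := by rw [← hd, Nat.mul_div_cancel_left (x + y) ha]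
    exact ⟨⟨⟨x + y, hd.symm⟩, by omega⟩, by omega, by omega⟩
  · rintro ⟨d, x⟩ hr
    simp only [Finset.mem_sigma, Nat.mem_divisors, mem_Ico] at hr
    obtain ⟨⟨hd, -⟩, hx1, hxd⟩ := hr
    have hd0 : 0 < d := by
      rcases Nat.eq_zero_or_pos d with rfl | h
      · simp at hxd
      · exact h
    have hc : d * (x + (n / d - x)) = n := by
      rw [show x + (n / d - x) = n / d by omega, Nat.mul_div_cancel' hd]
    simp only [Ff, mem_filter, mem_Qd]
    refine ⟨⟨hd0, by omega, hd0, by omega, by rw [← Nat.mul_add]; exact hc⟩, by trivial⟩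
  · rintro ⟨⟨a, x⟩, b, y⟩ hq
    simp only [Ff, mem_filter, mem_Qd] at hq
    obtain ⟨⟨ha, hx, hb, hy, h⟩, hab⟩ := hq
    subst hab
    have hd : a * (x + y) = n := by rw [Nat.mul_add]; omega
    have hx' : n / a = x + y := by rw [← hd, Nat.mul_div_cancel_left (x + y) ha]
    have hy' : n / a - x = y := by omega
    simp only [hy']
  · rintro ⟨d, x⟩ _
    rfl
  · rintro ⟨⟨a, x⟩, b, y⟩ hq
    simp only [Ff, mem_filter, mem_Qd] at hq
    obtain ⟨⟨ha, hx, hb, hy, h⟩, hab⟩ := hq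
    subst hab
    have hd : a * (x + y) = n := by rw [Nat.mul_add]; omega
    have hx' : n / a = x + y := by rw [← hd, Nat.mul_div_cancel_left (x + y) ha]
    rw [hx', show x + y - x = y by omega]

/-- conv sum as quadruple sum -/
lemma conv_eq_Qd (n : ℕ) :
    ∑ k ∈ Ioo 0 n, (ArithmeticFunction.sigma 1 k : ℚ) * (ArithmeticFunction.sigma 1 (n - k) : ℚ)
      = ∑ q ∈ Qd n, v q := by
  have hσ : ∀ m : ℕ, (ArithmeticFunction.sigma 1 m : ℚ)
      = ∑ p ∈ m.divisorsAntidiagonal, (p.1 : ℚ) := by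
    intro m
    rw [ArithmeticFunction.sigma_one_apply, Nat.sum_divisorsAntidiagonal (fun d _ => (d : ℚ))]
    push_cast
    rfl
  calc ∑ k ∈ Ioo 0 n, (ArithmeticFunction.sigma 1 k : ℚ) * (ArithmeticFunction.sigma 1 (n - k) : ℚ)
      = ∑ k ∈ Ioo 0 n, ∑ p ∈ (k.divisorsAntidiagonal ×ˢ (n - k).divisorsAntidiagonal),
          ((p.1.1 : ℚ) * p.2.1) := by
        refine Finset.sum_congr rfl fun k _ => ?_
        rw [hσ, hσ, Finset.sum_mul_sum, Finset.sum_product]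
    _ = ∑ r ∈ (Ioo 0 n).sigma
          (fun k => k.divisorsAntidiagonal ×ˢ (n - k).divisorsAntidiagonal),
          ((r.2.1.1 : ℚ) * r.2.2.1) := by
        rw [Finset.sum_sigma]
    _ = ∑ q ∈ Qd n, v q := by
        refine Finset.sum_nbij' (fun r => r.2) (fun q => ⟨q.1.1 * q.1.2, q⟩) ?_ ?_ ?_ ?_ ?_
        · rintro ⟨k, ⟨a, x⟩, b, y⟩ hr
          simp only [Finset.mem_sigma, mem_Ioo, mem_product, Nat.mem_divisorsAntidiagonal] at hr
          obtain ⟨⟨hk0, hkn⟩, ⟨hax, -⟩, hby, hnk⟩ := hr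
          rw [mem_Qd]
          refine ⟨?_, ?_, ?_, ?_, ?_⟩ <;> simp only []
          · by_contra h; push_neg at h; interval_cases a <;> omega
          · by_contra h; push_neg at h; interval_cases x <;> omega
          · by_contra h; push_neg at h; interval_cases b <;> omega
          · by_contra h; push_neg at h; interval_cases y <;> omega
          · omega
        · rintro ⟨⟨a, x⟩, b, y⟩ hq
          rw [mem_Qd] at hq
          dsimp only at hq
          obtain ⟨ha, hx, hb, hy, h⟩ := hq
          have h1 : 0 < a * x := Nat.mul_pos ha hx
          have h2 : 0 < b * y := Nat.mul_pos hb hy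
          simp only [Finset.mem_sigma, mem_Ioo, mem_product, Nat.mem_divisorsAntidiagonal]
          exact ⟨⟨h1, by omega⟩, ⟨by trivial, by omega⟩, by omega, by omega⟩
        · rintro ⟨k, ⟨a, x⟩, b, y⟩ hr
          simp only [Finset.mem_sigma, mem_Ioo, mem_product, Nat.mem_divisorsAntidiagonal] at hr
          obtain ⟨-, ⟨hax, -⟩, -⟩ := hr
          simp [hax]
        · rintro ⟨⟨a, x⟩, b, y⟩ _; rfl
        · rintro ⟨k, ⟨a, x⟩, b, y⟩ _; rfl

/-! ### Diagonal evaluations -/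

lemma E_v_eval (n : ℕ) (hn : 0 < n) :
    ∑ q ∈ Ef n, v q = ∑ s ∈ n.divisors, (((s : ℚ) ^ 3 - s) / 6) := by
  rw [sum_E n hn]
  refine Finset.sum_congr rfl fun s hs => ?_
  have h1 : ∑ a ∈ Ico 1 s, v ((a, n / s), (s - a, n / s))
      = ∑ a ∈ Ico 1 s, ((s : ℚ) * a - (a : ℚ) ^ 2) := by
    refine Finset.sum_congr rfl fun a ha => ?_
    rw [mem_Ico] at ha
    simp only [v]
    rw [Nat.cast_sub (le_of_lt ha.2)]
    ring
  rw [h1, Finset.sum_sub_distrib, ← Finset.mul_sum, gauss1, gauss2]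
  ring

lemma E_W_eval (n : ℕ) (hn : 0 < n) :
    ∑ q ∈ Ef n, W q = ∑ s ∈ n.divisors, (((s : ℚ) ^ 3 - 2 * (s : ℚ) ^ 2 + s) / 2) := by
  rw [sum_E n hn]
  refine Finset.sum_congr rfl fun s hs => ?_
  rw [Nat.mem_divisors] at hs
  have hs1 : 1 ≤ s := by
    rcases Nat.eq_zero_or_pos s with rfl | h
    · exfalso; exact hs.2 (Nat.eq_zero_of_zero_dvd hs.1)
    · exact h
  have h1 : ∑ a ∈ Ico 1 s, W ((a, n / s), (s - a, n / s))
      = ∑ a ∈ Ico 1 s, (3 * (a : ℚ) ^ 2 - 3 * (s : ℚ) * a + (s : ℚ) ^ 2) := by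
    refine Finset.sum_congr rfl fun a ha => ?_
    rw [mem_Ico] at ha
    simp only [W]
    rw [Nat.cast_sub (le_of_lt ha.2)]
    ring
  rw [h1, Finset.sum_add_distrib, Finset.sum_sub_distrib, ← Finset.mul_sum, ← Finset.mul_sum,
    gauss1, gauss2, Finset.sum_const, Nat.card_Ico, nsmul_eq_mul, Nat.cast_sub hs1]
  push_cast
  ring

lemma F_W_eval (n : ℕ) (hn : 0 < n) :
    ∑ q ∈ Ff n, W q = ∑ d ∈ n.divisors, ((n : ℚ) * d - (d : ℚ) ^ 2) := by
  rw [sum_F n hn]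
  refine Finset.sum_congr rfl fun d hd => ?_
  rw [Nat.mem_divisors] at hd
  have hd1 : 1 ≤ d := by
    rcases Nat.eq_zero_or_pos d with rfl | h
    · exfalso; exact hd.2 (Nat.eq_zero_of_zero_dvd hd.1)
    · exact h
  have hnd1 : 1 ≤ n / d := Nat.div_pos (Nat.le_of_dvd hn hd.1) hd1
  have h1 : ∑ x ∈ Ico 1 (n / d), W ((d, x), (d, n / d - x))
      = ∑ x ∈ Ico 1 (n / d), (d : ℚ) ^ 2 := by
    refine Finset.sum_congr rfl fun x hx => ?_
    simp only [W]
    ring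
  rw [h1, Finset.sum_const, Nat.card_Ico, nsmul_eq_mul, Nat.cast_sub hnd1]
  have hc : ((n / d : ℕ) : ℚ) * d = n := by
    rw_mod_cast [Nat.div_mul_cancel hd.1]
  nlinarith [hc]

/-! ### The key arithmetic identity -/

lemma key (n : ℕ) (hn : 0 < n) :
    12 * ∑ k ∈ Ioo 0 n,
        (ArithmeticFunction.sigma 1 k : ℚ) * (ArithmeticFunction.sigma 1 (n - k) : ℚ)
      = 5 * (ArithmeticFunction.sigma 3 n : ℚ) + (ArithmeticFunction.sigma 1 n : ℚ)
        - 6 * n * (ArithmeticFunction.sigma 1 n : ℚ) := by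
  have hv : ∀ q : (ℕ × ℕ) × (ℕ × ℕ), v q.swap = v q := by
    intro q; simp only [v, Prod.fst_swap, Prod.snd_swap]; ring
  have hW : ∀ q : (ℕ × ℕ) × (ℕ × ℕ), W q.swap = W q := by
    intro q; simp only [W, Prod.fst_swap, Prod.snd_swap]; ring
  -- trichotomy splits
  have t1 : ∑ q ∈ Qd n, v q = ∑ q ∈ Ef n, v q + ∑ q ∈ Yf n, v q + ∑ q ∈ Xf n, v q :=
    sum_trichotomy (Qd n) v (fun q => q.1.2) (fun q => q.2.2)
  have t2 : ∑ q ∈ Qd n, W q = ∑ q ∈ Ef n, W q + ∑ q ∈ Yf n, W q + ∑ q ∈ Xf n, W q :=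
    sum_trichotomy (Qd n) W (fun q => q.1.2) (fun q => q.2.2)
  have t3 : ∑ q ∈ Qd n, W q = ∑ q ∈ Ff n, W q + ∑ q ∈ Bf n, W q + ∑ q ∈ Bf' n, W q :=
    sum_trichotomy (Qd n) W (fun q => q.1.1) (fun q => q.2.1)
  -- swap symmetries
  have s1 : ∑ q ∈ Yf n, v q = ∑ q ∈ Xf n, v q := by
    have := sum_swap_filter (n := n) v hv (fun q => q.1.2 < q.2.2)
    simpa [Yf, Xf] using this
  have s2 : ∑ q ∈ Yf n, W q = ∑ q ∈ Xf n, W q := by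
    have := sum_swap_filter (n := n) W hW (fun q => q.1.2 < q.2.2)
    simpa [Yf, Xf] using this
  have s3 : ∑ q ∈ Bf' n, W q = ∑ q ∈ Bf n, W q := by
    have := sum_swap_filter (n := n) W hW (fun q => q.2.1 < q.1.1)
    simpa [Bf, Bf'] using this
  -- the bijection
  have hphi : ∑ q ∈ Bf n, W q = ∑ q ∈ Xf n, W q + 2 * ∑ q ∈ Xf n, v q := by
    rw [phi_sum n, Finset.sum_add_distrib, ← Finset.mul_sum]
  -- derive 4 * Sx = WE - WF
  have h4 : 4 * ∑ q ∈ Xf n, v q = ∑ q ∈ Ef n, W q - ∑ q ∈ Ff n, W q := by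
    linarith [t2, t3, s2, s3, hphi]
  -- hence 2 * S = 2 * SE + WE - WF
  have h2S : 2 * ∑ q ∈ Qd n, v q
      = 2 * ∑ q ∈ Ef n, v q + (∑ q ∈ Ef n, W q - ∑ q ∈ Ff n, W q) := by
    linarith [t1, s1, h4]
  -- sigma values as divisor sums
  have hσ1 : (ArithmeticFunction.sigma 1 n : ℚ) = ∑ d ∈ n.divisors, (d : ℚ) := by
    rw [ArithmeticFunction.sigma_one_apply]
    push_cast
    rfl
  have hσ3 : (ArithmeticFunction.sigma 3 n : ℚ) = ∑ d ∈ n.divisors, (d : ℚ) ^ 3 := by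
    rw [ArithmeticFunction.sigma_apply]
    push_cast
    rfl
  rw [conv_eq_Qd n]
  have hE_v := E_v_eval n hn
  have hE_W := E_W_eval n hn
  have hF_W := F_W_eval n hn
  have expand : 12 * (∑ s ∈ n.divisors, (((s : ℚ) ^ 3 - s) / 6))
      + 6 * (∑ s ∈ n.divisors, (((s : ℚ) ^ 3 - 2 * (s : ℚ) ^ 2 + s) / 2))
      - 6 * (∑ d ∈ n.divisors, ((n : ℚ) * d - (d : ℚ) ^ 2))
      = 5 * (∑ d ∈ n.divisors, (d : ℚ) ^ 3) + (∑ d ∈ n.divisors, (d : ℚ))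
        - 6 * n * (∑ d ∈ n.divisors, (d : ℚ)) := by
    simp only [Finset.mul_sum, ← Finset.sum_add_distrib, ← Finset.sum_sub_distrib]
    exact Finset.sum_congr rfl fun s _ => by ring
  rw [hσ1, hσ3]
  linarith [h2S, hE_v, hE_W, hF_W, expand]

end RamanujanPOde

open PowerSeries

/-- Ramanujan's functions `P, Q, R` as formal power series in `q`,
with `P(q) = 1 − 24∑ σ₁(n)qⁿ`, `Q(q) = 1 + 240∑ σ₃(n)qⁿ`,
satisfy `δP = (P²−Q)/12` where `δ = q d/dq`. -/
theorem ramanujan_P_ode :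
    let P : PowerSeries ℚ :=
      PowerSeries.mk (fun n => if n = 0 then 1 else -24 * (ArithmeticFunction.sigma 1 n : ℚ))
    let Q : PowerSeries ℚ :=
      PowerSeries.mk (fun n => if n = 0 then 1 else 240 * (ArithmeticFunction.sigma 3 n : ℚ))
    let δ : PowerSeries ℚ → PowerSeries ℚ :=
      fun f => PowerSeries.mk (fun n => (n : ℚ) * PowerSeries.coeff n f)
    δ P = PowerSeries.C (1 / 12 : ℚ) * (P ^ 2 - Q) := by
  intro P Q δ
  have hP : ∀ m : ℕ, PowerSeries.coeff m P
      = if m = 0 then 1 else -24 * (ArithmeticFunction.sigma 1 m : ℚ) := fun m =>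
    PowerSeries.coeff_mk m _
  have hQ : ∀ m : ℕ, PowerSeries.coeff m Q
      = if m = 0 then 1 else 240 * (ArithmeticFunction.sigma 3 m : ℚ) := fun m =>
    PowerSeries.coeff_mk m _
  ext n
  have hδ : PowerSeries.coeff n (δ P) = (n : ℚ) * PowerSeries.coeff n P :=
    PowerSeries.coeff_mk n _
  rw [hδ]
  rw [PowerSeries.coeff_C_mul, map_sub]
  have hsq : PowerSeries.coeff n (P ^ 2)
      = ∑ p ∈ Finset.HasAntidiagonal.antidiagonal n, PowerSeries.coeff p.1 P * PowerSeries.coeff p.2 P := by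
    rw [sq, PowerSeries.coeff_mul]
  rw [hsq, hQ]
  rcases Nat.eq_zero_or_pos n with rfl | hn
  · simp [hP]
  · have hne : n ≠ 0 := by omega
    rw [Finset.Nat.sum_antidiagonal_eq_sum_range_succ (fun i j =>
      PowerSeries.coeff i P * PowerSeries.coeff j P), Finset.sum_range_succ,
      Finset.range_eq_Ico, Finset.sum_eq_sum_Ico_succ_bot hn]
    have hmid : ∑ i ∈ Finset.Ico 1 n,
        PowerSeries.coeff i P * PowerSeries.coeff (n - i) P
        = ∑ i ∈ Finset.Ico 1 n,
          (576 * ((ArithmeticFunction.sigma 1 i : ℚ)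
            * (ArithmeticFunction.sigma 1 (n - i) : ℚ))) := by
      refine Finset.sum_congr rfl fun i hi => ?_
      rw [Finset.mem_Ico] at hi
      rw [hP, hP, if_neg (by omega), if_neg (by omega)]
      ring
    rw [hmid, show n - 0 = n by omega, show n - n = 0 by omega, hP 0, hP n,
      if_pos rfl, if_neg hne, if_neg hne, ← Finset.mul_sum]
    have hk := RamanujanPOde.key n hn
    have hIoo : ∑ k ∈ Finset.Ioo 0 n,
        (ArithmeticFunction.sigma 1 k : ℚ) * (ArithmeticFunction.sigma 1 (n - k) : ℚ)
        = ∑ i ∈ Finset.Ico 1 n,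
          (ArithmeticFunction.sigma 1 i : ℚ) * (ArithmeticFunction.sigma 1 (n - i) : ℚ) := by
      refine Finset.sum_congr ?_ fun _ _ => rfl
      ext a
      simp only [Finset.mem_Ioo, Finset.mem_Ico]
      omega
    rw [hIoo] at hk
    linarith [hk]
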